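/- (Opial's lemma, continuous form) Let S ⊆ H be nonempty and x : [0, ∞) → H. If (i) for every z ∈ S the limit lim_{t→∞} ‖x(t) − z‖ exists, and (ii) every weak sequential cluster point of x(t) as t → ∞ belongs to S, then x(t) converges weakly to some x_∞ ∈ S as t → ∞. -/

import Mathlib

open scoped RealInnerProductSpace
open Filter Topology

theorem weak_seq_compact
    {H : Type*} [NormedAddCommGroup H] [InnerProductSpace ℝ H] [CompleteSpace H]
    (y : ℕ → H) (C : ℝ) (hC : ∀ n, ‖y n‖ ≤ C) :
    ∃ (p : H) (φ : ℕ → ℕ), StrictMono φ ∧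
      ∀ v : H, Tendsto (fun n => ⟪y (φ n), v⟫) atTop (nhds ⟪p, v⟫) := by
  classical
  set C' : ℝ := max C 0 with hC'def
  have hC'0 : 0 ≤ C' := le_max_right _ _
  have hC' : ∀ n, ‖y n‖ ≤ C' := fun n => (hC n).trans (le_max_left _ _)
  set K : Submodule ℝ H := (Submodule.span ℝ (Set.range y)).topologicalClosure with hK
  have hyK : ∀ n, y n ∈ K :=
    fun n => Submodule.le_topologicalClosure _ (Submodule.subset_span (Set.mem_range_self n))
  have hKclosed : IsClosed (K : Set H) := Submodule.isClosed_topologicalClosure _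
  haveI : CompleteSpace K := hKclosed.completeSpace_coe
  -- separability and a dense sequence
  have hsep : TopologicalSpace.IsSeparable (K : Set H) := by
    have h1 : TopologicalSpace.IsSeparable (Submodule.span ℝ (Set.range y) : Set H) :=
      (Set.countable_range y).isSeparable.span
    have : (K : Set H) = closure (Submodule.span ℝ (Set.range y) : Set H) :=
      Submodule.topologicalClosure_coe _
    rw [this]
    exact h1.closure
  obtain ⟨c, hc_count, hc_sub⟩ := hsep
  obtain ⟨D, hD⟩ : ∃ D : ℕ → H, insert 0 c = Set.range D :=
    (hc_count.insert 0).exists_eq_range (Set.insert_nonempty _ _)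
  have hdense : ∀ w ∈ K, ∀ ε > 0, ∃ k, ‖w - D k‖ < ε := by
    intro w hw ε hε
    have hw' : w ∈ closure (insert 0 c) :=
      closure_mono (Set.subset_insert 0 c) (hc_sub hw)
    obtain ⟨b, hb, hbd⟩ := Metric.mem_closure_iff.1 hw' ε hε
    rw [hD] at hb
    obtain ⟨k, rfl⟩ := hb
    exact ⟨k, by rwa [← dist_eq_norm]⟩
  -- diagonal extraction via compactness of a countable product of intervals
  set T : Set (ℕ → ℝ) := Set.univ.pi fun k => Set.Icc (-(C' * ‖D k‖)) (C' * ‖D k‖) with hT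
  have hTcomp : IsCompact T := isCompact_univ_pi fun k => isCompact_Icc
  have hmem : ∀ n, (fun k => ⟪y n, D k⟫) ∈ T := by
    intro n
    intro k _
    have h := abs_real_inner_le_norm (y n) (D k)
    have h2 : ‖y n‖ * ‖D k‖ ≤ C' * ‖D k‖ :=
      mul_le_mul_of_nonneg_right (hC' n) (norm_nonneg _)
    constructor
    · linarith [neg_abs_le (⟪y n, D k⟫)]
    · linarith [le_abs_self (⟪y n, D k⟫)]
  obtain ⟨g0, -, φ, hφ, hg0⟩ := hTcomp.isSeqCompact hmem
  have hconv : ∀ k, Tendsto (fun n => ⟪y (φ n), D k⟫) atTop (nhds (g0 k)) := by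
    intro k
    exact (tendsto_pi_nhds.1 hg0 k)
  -- Cauchy on K
  have keyK : ∀ w ∈ K, CauchySeq (fun n => ⟪y (φ n), w⟫) := by
    intro w hw
    rw [Metric.cauchySeq_iff]
    intro ε hε
    obtain ⟨k, hk⟩ : ∃ k, ‖w - D k‖ < ε / (4 * (C' + 1)) :=
      hdense w hw _ (by positivity)
    obtain ⟨N, hN⟩ := Metric.cauchySeq_iff.1 (hconv k).cauchySeq (ε / 2) (by positivity)
    refine ⟨N, fun m hm n hn => ?_⟩
    have h1 : |⟪y (φ m) - y (φ n), D k⟫| < ε / 2 := by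
      have := hN m hm n hn
      rwa [Real.dist_eq, ← inner_sub_left] at this
    have h2 : |⟪y (φ m) - y (φ n), w - D k⟫| ≤ (2 * C') * (ε / (4 * (C' + 1))) := by
      calc |⟪y (φ m) - y (φ n), w - D k⟫| ≤ ‖y (φ m) - y (φ n)‖ * ‖w - D k‖ :=
            abs_real_inner_le_norm _ _
        _ ≤ (2 * C') * (ε / (4 * (C' + 1))) := by
            apply mul_le_mul _ hk.le (norm_nonneg _) (by positivity)
            calc ‖y (φ m) - y (φ n)‖ ≤ ‖y (φ m)‖ + ‖y (φ n)‖ := norm_sub_le _ _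
              _ ≤ 2 * C' := by linarith [hC' (φ m), hC' (φ n)]
    have h3 : (2 * C') * (ε / (4 * (C' + 1))) ≤ ε / 2 := by
      have ha : ε / (4 * (C' + 1)) * (4 * (C' + 1)) = ε := div_mul_cancel₀ _ (by positivity)
      have ha0 : 0 ≤ ε / (4 * (C' + 1)) := by positivity
      nlinarith
    have hsplit : ⟪y (φ m), w⟫ - ⟪y (φ n), w⟫
        = ⟪y (φ m) - y (φ n), D k⟫ + ⟪y (φ m) - y (φ n), w - D k⟫ := by
      rw [← inner_add_right, add_sub_cancel, inner_sub_left]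
    rw [Real.dist_eq, hsplit]
    calc |⟪y (φ m) - y (φ n), D k⟫ + ⟪y (φ m) - y (φ n), w - D k⟫|
        ≤ |⟪y (φ m) - y (φ n), D k⟫| + |⟪y (φ m) - y (φ n), w - D k⟫| := abs_add_le _ _
      _ < ε := by linarith
  -- Cauchy everywhere, via orthogonal projection
  have hinner_eq : ∀ (n : ℕ) (v : H), ⟪y n, v⟫ = ⟪y n, (Submodule.orthogonalProjectionOnto K v : H)⟫ := by
    intro n v
    have horth : v - (Submodule.orthogonalProjectionOnto K v : H) ∈ Kᗮ :=
      K.sub_starProjection_mem_orthogonal v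
    have h0 : ⟪y n, v - (Submodule.orthogonalProjectionOnto K v : H)⟫ = 0 :=
      (Submodule.mem_orthogonal K _).1 horth (y n) (hyK n)
    have hsub : ⟪y n, v⟫ - ⟪y n, (Submodule.orthogonalProjectionOnto K v : H)⟫ = 0 := by
      rw [← inner_sub_right]; exact h0
    linarith
  have hcau : ∀ v : H, CauchySeq (fun n => ⟪y (φ n), v⟫) := by
    intro v
    have := keyK (Submodule.orthogonalProjectionOnto K v : H) (Submodule.orthogonalProjectionOnto K v).2
    simpa only [← hinner_eq] using this
  have hlim : ∀ v : H, ∃ L : ℝ, Tendsto (fun n => ⟪y (φ n), v⟫) atTop (nhds L) :=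
    fun v => cauchySeq_tendsto_of_complete (hcau v)
  choose g hg using hlim
  have hadd : ∀ v v', g (v + v') = g v + g v' := by
    intro v v'
    refine tendsto_nhds_unique (f := fun n => ⟪y (φ n), v + v'⟫) (l := atTop) ?_ ?_
    · exact hg _
    · simpa only [inner_add_right] using (hg v).add (hg v')
  have hsmul : ∀ (c : ℝ) (v : H), g (c • v) = c * g v := by
    intro c v
    refine tendsto_nhds_unique (f := fun n => ⟪y (φ n), c • v⟫) (l := atTop) (hg _) ?_
    simpa only [real_inner_smul_right] using (hg v).const_mul c
  have hbound : ∀ v, |g v| ≤ C' * ‖v‖ := by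
    intro v
    have h1 : Tendsto (fun n => |⟪y (φ n), v⟫|) atTop (nhds |g v|) := (hg v).abs
    refine le_of_tendsto h1 (Eventually.of_forall fun n => ?_)
    calc |⟪y (φ n), v⟫| ≤ ‖y (φ n)‖ * ‖v‖ := abs_real_inner_le_norm _ _
      _ ≤ C' * ‖v‖ := mul_le_mul_of_nonneg_right (hC' _) (norm_nonneg _)
  let L : H →ₗ[ℝ] ℝ :=
    { toFun := g, map_add' := hadd, map_smul' := hsmul }
  let L' : H →L[ℝ] ℝ := LinearMap.mkContinuous L C' (fun v => by
    simpa [L, Real.norm_eq_abs] using hbound v)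
  refine ⟨(InnerProductSpace.toDual ℝ H).symm L', φ, hφ, fun v => ?_⟩
  have : ⟪(InnerProductSpace.toDual ℝ H).symm L', v⟫ = L' v :=
    InnerProductSpace.toDual_symm_apply
  rw [this]
  exact hg v

/-- Opial's lemma, continuous form. -/
theorem opial_continuous
    {H : Type*} [NormedAddCommGroup H] [InnerProductSpace ℝ H] [CompleteSpace H]
    (S : Set H) (hS : S.Nonempty) (x : ℝ → H)
    (h1 : ∀ z ∈ S, ∃ l : ℝ, Tendsto (fun t => ‖x t - z‖) atTop (nhds l))
    (h2 : ∀ p : H, (∃ t : ℕ → ℝ, Tendsto t atTop atTop ∧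
        ∀ v : H, Tendsto (fun n => ⟪x (t n), v⟫) atTop (nhds ⟪p, v⟫)) → p ∈ S) :
    ∃ xi ∈ S, ∀ v : H, Tendsto (fun t => ⟪x t, v⟫) atTop (nhds ⟪xi, v⟫) := by
  classical
  obtain ⟨z₀, hz₀⟩ := hS
  obtain ⟨l₀, hl₀⟩ := h1 z₀ hz₀
  -- eventual boundedness
  obtain ⟨T₀, hT₀⟩ : ∃ T₀ : ℝ, ∀ t ≥ T₀, ‖x t - z₀‖ < l₀ + 1 := by
    have := hl₀.eventually_lt_const (lt_add_one l₀)
    exact eventually_atTop.1 this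
  set C : ℝ := l₀ + 1 + ‖z₀‖ with hCdef
  have hbdd : ∀ t ≥ T₀, ‖x t‖ ≤ C := by
    intro t ht
    calc ‖x t‖ = ‖x t - z₀ + z₀‖ := by rw [sub_add_cancel]
      _ ≤ ‖x t - z₀‖ + ‖z₀‖ := norm_add_le _ _
      _ ≤ C := by linarith [hT₀ t ht]
  -- extraction of weak cluster points, which lie in S
  have extract : ∀ s : ℕ → ℝ, Tendsto s atTop atTop →
      ∃ p ∈ S, ∃ ms : ℕ → ℕ, Tendsto ms atTop atTop ∧
        ∀ v : H, Tendsto (fun n => ⟪x (s (ms n)), v⟫) atTop (nhds ⟪p, v⟫) := by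
    intro s hs
    obtain ⟨N, hN⟩ := eventually_atTop.1 (hs.eventually (eventually_ge_atTop T₀))
    obtain ⟨p, φ, hφ, hconv⟩ := weak_seq_compact (fun n => x (s (n + N))) C
      (fun n => hbdd _ (hN _ (Nat.le_add_left N n)))
    have hms : Tendsto (fun n => φ n + N) atTop atTop :=
      tendsto_atTop_mono (fun n => Nat.le_add_right (φ n) N) hφ.tendsto_atTop
    have hpS : p ∈ S := h2 p ⟨fun n => s (φ n + N), hs.comp hms, fun v => hconv v⟩
    exact ⟨p, hpS, fun n => φ n + N, hms, fun v => hconv v⟩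
  obtain ⟨p₀, hp₀S, ms₀, hms₀, hconv₀⟩ :=
    extract (fun n => (n : ℝ)) tendsto_natCast_atTop_atTop
  have ht₀ : Tendsto (fun n => ((ms₀ n : ℕ) : ℝ)) atTop atTop :=
    tendsto_natCast_atTop_atTop.comp hms₀
  -- uniqueness of weak cluster points
  have uniq : ∀ q ∈ S, ∀ u : ℕ → ℝ, Tendsto u atTop atTop →
      (∀ v : H, Tendsto (fun n => ⟪x (u n), v⟫) atTop (nhds ⟪q, v⟫)) → q = p₀ := by
    intro q hqS u hu hqconv
    obtain ⟨lp, hlp⟩ := h1 p₀ hp₀S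
    obtain ⟨lq, hlq⟩ := h1 q hqS
    set L : ℝ := ((lp ^ 2 - lq ^ 2) - ‖p₀‖ ^ 2 + ‖q‖ ^ 2) / 2 with hLdef
    have hc : Tendsto (fun t => ⟪x t, q - p₀⟫) atTop (nhds L) := by
      have hp2 : Tendsto (fun t => ‖x t - p₀‖ ^ 2) atTop (nhds (lp ^ 2)) := hlp.pow 2
      have hq2 : Tendsto (fun t => ‖x t - q‖ ^ 2) atTop (nhds (lq ^ 2)) := hlq.pow 2
      have heq : ∀ t, ⟪x t, q - p₀⟫
          = ((‖x t - p₀‖ ^ 2 - ‖x t - q‖ ^ 2) - ‖p₀‖ ^ 2 + ‖q‖ ^ 2) / 2 := by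
        intro t
        have e1 : ‖x t - p₀‖ ^ 2 = ‖x t‖ ^ 2 - 2 * ⟪x t, p₀⟫ + ‖p₀‖ ^ 2 :=
          norm_sub_sq_real (x t) p₀
        have e2 : ‖x t - q‖ ^ 2 = ‖x t‖ ^ 2 - 2 * ⟪x t, q⟫ + ‖q‖ ^ 2 :=
          norm_sub_sq_real (x t) q
        have e3 : ⟪x t, q - p₀⟫ = ⟪x t, q⟫ - ⟪x t, p₀⟫ := inner_sub_right _ _ _
        rw [e3]; rw [e1, e2]; ring
      have : Tendsto (fun t => ((‖x t - p₀‖ ^ 2 - ‖x t - q‖ ^ 2) - ‖p₀‖ ^ 2 + ‖q‖ ^ 2) / 2)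
          atTop (nhds L) := by
        rw [hLdef]
        exact (((hp2.sub hq2).sub_const _).add_const _).div_const 2
      exact (funext heq : (fun t => ⟪x t, q - p₀⟫) = _) ▸ this
    have hA : ⟪p₀, q - p₀⟫ = L :=
      tendsto_nhds_unique (hconv₀ (q - p₀)) (hc.comp ht₀)
    have hB : ⟪q, q - p₀⟫ = L :=
      tendsto_nhds_unique (hqconv (q - p₀)) (hc.comp hu)
    have : ⟪q - p₀, q - p₀⟫ = (0 : ℝ) := by
      rw [inner_sub_left, hA, hB, sub_self]
    have := inner_self_eq_zero.1 this
    exact sub_eq_zero.1 this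
  refine ⟨p₀, hp₀S, fun v => ?_⟩
  apply tendsto_of_subseq_tendsto
  intro ns hns
  obtain ⟨q, hqS, ms, hms, hqconv⟩ := extract ns hns
  have hq : q = p₀ := uniq q hqS (fun n => ns (ms n)) (hns.comp hms) hqconv
  exact ⟨ms, by rw [← hq]; exact hqconv v⟩
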